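/- Let K and K^m be symmetric positive definite n×n matrices and y ∈ ℝ^n. Then y^T (K^m)^{-1} y ≤ y^T K^{-1} y + ‖(K^m)^{-1/2} y‖ · ‖(K^m)^{-1/2}(K − K^m)K^{-1/2}‖ · ‖K^{-1/2} y‖, where ‖·‖ is the spectral norm for matrices and Euclidean norm for vectors. -/

import Mathlib

open Matrix

noncomputable def specNorm {n m : ℕ} (A : Matrix (Fin n) (Fin m) ℝ) : ℝ :=
  ‖LinearMap.toContinuousLinearMap (Matrix.toEuclideanLin A)‖

noncomputable def euclNorm {n : ℕ} (v : Fin n → ℝ) : ℝ := Real.sqrt (v ⬝ᵥ v)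

lemma euclNorm_eq {n : ℕ} (v : Fin n → ℝ) :
    euclNorm v = ‖(WithLp.equiv 2 (Fin n → ℝ)).symm v‖ := by
  rw [EuclideanSpace.norm_eq, euclNorm]
  congr 1
  simp [dotProduct, Real.norm_eq_abs, sq_abs, sq]

lemma key_bound {n : ℕ} (A : Matrix (Fin n) (Fin n) ℝ) (u v : Fin n → ℝ) :
    u ⬝ᵥ (A *ᵥ v) ≤ euclNorm u * specNorm A * euclNorm v := by
  set u' : EuclideanSpace ℝ (Fin n) := (WithLp.equiv 2 (Fin n → ℝ)).symm u
  set v' : EuclideanSpace ℝ (Fin n) := (WithLp.equiv 2 (Fin n → ℝ)).symm v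
  have h1 : u ⬝ᵥ (A *ᵥ v) = inner ℝ u' ((Matrix.toEuclideanLin A).toContinuousLinearMap v') := by
    simp only [LinearMap.coe_toContinuousLinearMap', u', v',
      WithLp.equiv_symm_apply, Matrix.toEuclideanLin_apply_piLp_toLp]
    simp [PiLp.inner_apply, dotProduct, mul_comm]
  rw [h1]
  calc inner ℝ u' ((Matrix.toEuclideanLin A).toContinuousLinearMap v')
      ≤ ‖u'‖ * ‖(Matrix.toEuclideanLin A).toContinuousLinearMap v'‖ :=
        real_inner_le_norm _ _
    _ ≤ ‖u'‖ * (‖(Matrix.toEuclideanLin A).toContinuousLinearMap‖ * ‖v'‖) := by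
        gcongr; exact ContinuousLinearMap.le_opNorm _ _
    _ = euclNorm u * specNorm A * euclNorm v := by
        rw [euclNorm_eq, euclNorm_eq, specNorm]; ring

/-- perturbation bound for quadratic forms of inverses of nearby SPD kernel
matrices. `R` and `Rm` are the inverse square roots `K^{-1/2}` and `(K^m)^{-1/2}`. -/
theorem stmt_5 {n : ℕ} (K Km R Rm : Matrix (Fin n) (Fin n) ℝ)
    (hK : K.PosDef) (hKm : Km.PosDef) (hR : R.PosDef) (hRm : Rm.PosDef)
    (hRsq : R * R = K⁻¹) (hRmsq : Rm * Rm = Km⁻¹) (y : Fin n → ℝ) :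
    y ⬝ᵥ (Km⁻¹ *ᵥ y) ≤
      y ⬝ᵥ (K⁻¹ *ᵥ y) +
        euclNorm (Rm *ᵥ y) * specNorm (Rm * (K - Km) * R) * euclNorm (R *ᵥ y) := by
  have hKu : IsUnit K.det := isUnit_iff_ne_zero.mpr (ne_of_gt hK.det_pos)
  have hKmu : IsUnit Km.det := isUnit_iff_ne_zero.mpr (ne_of_gt hKm.det_pos)
  have hdiff : Km⁻¹ - K⁻¹ = Rm * (Rm * (K - Km) * R) * R := by
    have : Km⁻¹ * (K - Km) * K⁻¹ = Km⁻¹ - K⁻¹ := by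
      rw [Matrix.mul_sub, Matrix.sub_mul, Matrix.nonsing_inv_mul _ hKmu,
        Matrix.mul_nonsing_inv_cancel_right _ _ hKu, Matrix.one_mul]
    rw [← this, ← hRsq, ← hRmsq]
    noncomm_ring
  have h2 : (Rm *ᵥ y) ⬝ᵥ ((Rm * (K - Km) * R) *ᵥ (R *ᵥ y))
      = y ⬝ᵥ (Km⁻¹ *ᵥ y) - y ⬝ᵥ (K⁻¹ *ᵥ y) := by
    have hRmt : Rmᵀ = Rm := hRm.isHermitian
    have hvm : Rm *ᵥ y = y ᵥ* Rm := by rw [← Matrix.mulVec_transpose, hRmt]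
    rw [Matrix.mulVec_mulVec, hvm, ← Matrix.dotProduct_mulVec, Matrix.mulVec_mulVec,
      show Rm * (Rm * (K - Km) * R * R) = Km⁻¹ - K⁻¹ from by rw [hdiff]; noncomm_ring,
      Matrix.sub_mulVec, dotProduct_sub]
  nlinarith [key_bound (Rm * (K - Km) * R) (Rm *ᵥ y) (R *ᵥ y), h2]
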